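/- Let c be a symmetric element of the d-th Weyl algebra W(d) and suppose there exist r₁, …, r_k, s₀, …, s_l ∈ W(d) with Σᵢ rᵢ*·c·rᵢ = Σⱼ sⱼ*·sⱼ such that the Schrödinger representation π₀(s₀) is invertible. Then π₀(c) is not negative semidefinite. -/

import Mathlib

open MulOpposite

/-! The `d`-th Weyl algebra `W(d)`: the unital complex algebra with generators
`a₁, …, a_d, a₋₁, …, a₋_d` (the generator `(k, false)` is `a_{k+1}` and
`(k, true)` is `a_{-(k+1)}`), relations `aₖ a₋ₖ − a₋ₖ aₖ = 1` and
`aₖ aₗ = aₗ aₖ` for `k ≠ -l`, and the involution determined by `aₖ* = a₋ₖ`. -/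

abbrev WeylGen (d : ℕ) := Fin d × Bool

/-- The defining relations of the Weyl algebra. -/
inductive weylRel (d : ℕ) :
    FreeAlgebra ℂ (WeylGen d) → FreeAlgebra ℂ (WeylGen d) → Prop
  | ccr (k : Fin d) :
      weylRel d (FreeAlgebra.ι ℂ (k, false) * FreeAlgebra.ι ℂ (k, true))
        (FreeAlgebra.ι ℂ (k, true) * FreeAlgebra.ι ℂ (k, false) + 1)
  | commute (x y : WeylGen d) (h : x.1 ≠ y.1 ∨ x.2 = y.2) :
      weylRel d (FreeAlgebra.ι ℂ x * FreeAlgebra.ι ℂ y)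
        (FreeAlgebra.ι ℂ y * FreeAlgebra.ι ℂ x)

/-- The `d`-th Weyl algebra. -/
abbrev WeylAlgebra (d : ℕ) := RingQuot (weylRel d)

namespace WeylAlgebra

variable (d : ℕ)

/-- The conjugated `ℂ`-algebra structure on `(WeylAlgebra d)ᵐᵒᵖ`. -/
noncomputable def conjAlg : Algebra ℂ (WeylAlgebra d)ᵐᵒᵖ :=
  ((algebraMap ℂ (WeylAlgebra d)ᵐᵒᵖ).comp (starRingEnd ℂ)).toAlgebra'
    (by
      intro c x
      simp only [RingHom.coe_comp, Function.comp_apply]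
      exact (Algebra.commutes _ _))

/-- The involution on the Weyl algebra, as a ring homomorphism to the
opposite ring; it sends `aₖ` to `a₋ₖ` and is conjugate-linear on scalars. -/
noncomputable def starAux : WeylAlgebra d →+* (WeylAlgebra d)ᵐᵒᵖ := by
  letI := conjAlg d
  refine RingQuot.lift
    ⟨((FreeAlgebra.lift ℂ
        (fun x : WeylGen d =>
          op (RingQuot.mkAlgHom ℂ (weylRel d)
            (FreeAlgebra.ι ℂ (x.1, !x.2))))) :
        FreeAlgebra ℂ (WeylGen d) →ₐ[ℂ] (WeylAlgebra d)ᵐᵒᵖ).toRingHom, ?_⟩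
  have hx : ∀ x : WeylGen d,
      ((FreeAlgebra.lift ℂ
        (fun x : WeylGen d =>
          op (RingQuot.mkAlgHom ℂ (weylRel d)
            (FreeAlgebra.ι ℂ (x.1, !x.2))))) :
        FreeAlgebra ℂ (WeylGen d) →ₐ[ℂ] (WeylAlgebra d)ᵐᵒᵖ).toRingHom
          (FreeAlgebra.ι ℂ x)
        = op (RingQuot.mkAlgHom ℂ (weylRel d) (FreeAlgebra.ι ℂ (x.1, !x.2))) :=
    fun x => FreeAlgebra.lift_ι_apply _ _
  intro a b h
  induction h with
  | ccr k =>
      simp only [map_mul, map_add, map_one, hx, Bool.not_false, Bool.not_true]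
      rw [← op_mul, ← op_mul, ← op_one, ← op_add]
      rw [← map_mul, ← map_mul, ← map_one (RingQuot.mkAlgHom ℂ (weylRel d)),
        ← map_add]
      exact congrArg op (RingQuot.mkAlgHom_rel ℂ (weylRel.ccr k))
  | commute x y hxy =>
      simp only [map_mul, hx]
      rw [← op_mul, ← op_mul, ← map_mul, ← map_mul]
      exact congrArg op (RingQuot.mkAlgHom_rel ℂ
        (weylRel.commute (y.1, !y.2) (x.1, !x.2)
          (by
            rcases hxy with h | h
            · exact Or.inl (by simpa using fun e => h e.symm)
            · exact Or.inr (by simp [h]))))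

theorem starAux_mk (a : FreeAlgebra ℂ (WeylGen d)) :
    starAux d (RingQuot.mkAlgHom ℂ (weylRel d) a) =
      (by letI := conjAlg d; exact
        ((FreeAlgebra.lift ℂ
          (fun x : WeylGen d =>
            op (RingQuot.mkAlgHom ℂ (weylRel d)
              (FreeAlgebra.ι ℂ (x.1, !x.2))))) :
          FreeAlgebra ℂ (WeylGen d) →ₐ[ℂ] (WeylAlgebra d)ᵐᵒᵖ) a) := by
  have h1 : (RingQuot.mkAlgHom ℂ (weylRel d) a : WeylAlgebra d) =
      RingQuot.mkRingHom (weylRel d) a := by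
    rw [← RingQuot.mkAlgHom_coe ℂ]; rfl
  rw [h1, starAux, RingQuot.lift_mkRingHom_apply]
  rfl

theorem starAux_ι (x : WeylGen d) :
    starAux d (RingQuot.mkAlgHom ℂ (weylRel d) (FreeAlgebra.ι ℂ x)) =
      op (RingQuot.mkAlgHom ℂ (weylRel d) (FreeAlgebra.ι ℂ (x.1, !x.2))) := by
  letI := conjAlg d
  rw [starAux_mk]
  exact FreeAlgebra.lift_ι_apply _ _

theorem starAux_algebraMap (c : ℂ) :
    starAux d (algebraMap ℂ (WeylAlgebra d) c) =
      op (algebraMap ℂ (WeylAlgebra d) (starRingEnd ℂ c)) := by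
  letI := conjAlg d
  have h1 : (algebraMap ℂ (WeylAlgebra d) c) =
      RingQuot.mkAlgHom ℂ (weylRel d) (algebraMap ℂ _ c) :=
    (AlgHom.commutes _ c).symm
  rw [h1, starAux_mk]
  exact (AlgHom.commutes _ c).trans rfl

/-- The natural involution of the Weyl algebra: `star aₖ = a₋ₖ`. -/
noncomputable instance instStarRing : StarRing (WeylAlgebra d) where
  star w := unop (starAux d w)
  star_involutive := by
    intro w
    obtain ⟨a, rfl⟩ := RingQuot.mkAlgHom_surjective ℂ (weylRel d) w
    show unop (starAux d (unop (starAux d _))) = _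
    induction a using FreeAlgebra.induction with
    | grade0 c =>
        rw [AlgHom.commutes, starAux_algebraMap, unop_op, starAux_algebraMap,
          unop_op, Complex.conj_conj]
    | grade1 x =>
        rw [starAux_ι, unop_op, starAux_ι, unop_op]
        simp
    | mul a b ha hb =>
        rw [map_mul, map_mul, unop_mul, map_mul, unop_mul, ha, hb]
    | add a b ha hb =>
        rw [map_add, map_add, unop_add, map_add, unop_add, ha, hb]
  star_mul := by intro x y; simp [map_mul]
  star_add := by intro x y; simp [map_add]

end WeylAlgebra

/-- If `c` is a symmetric element of the Weyl algebra `W(d)` and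
`Σᵢ rᵢ* c rᵢ = Σⱼ sⱼ* sⱼ` where the Schrödinger representation (modelled as a
`*`-representation `π₀` of `W(d)` by linear operators on a dense domain `V` of
`L²(ℝ^d)`, a nontrivial complex inner product space) makes `π₀ s₀` invertible,
then `π₀ c` is not negative semidefinite. -/
theorem weylAlgebra_not_negative_semidefinite {d : ℕ}
    {V : Type*} [NormedAddCommGroup V] [InnerProductSpace ℂ V] [Nontrivial V]
    (π₀ : WeylAlgebra d →ₐ[ℂ] Module.End ℂ V)
    (hπ₀ : ∀ (w : WeylAlgebra d) (φ ψ : V),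
      (inner ℂ (π₀ w φ) ψ : ℂ) = inner ℂ φ (π₀ (star w) ψ))
    (c : WeylAlgebra d) (hc : star c = c)
    {k l : ℕ} (r : Fin k → WeylAlgebra d) (s : Fin (l + 1) → WeylAlgebra d)
    (hid : ∑ i, star (r i) * c * r i = ∑ j, star (s j) * s j)
    (hs₀ : IsUnit (π₀ (s 0))) :
    ¬ ∀ φ : V, (inner ℂ (π₀ c φ) φ : ℂ).re ≤ 0 := by
  intro hneg
  obtain ⟨φ, hφ⟩ := exists_ne (0 : V)
  have hs0 : π₀ (s 0) φ ≠ 0 := by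
    intro h
    have hbij := (Module.End.isUnit_iff _).mp hs₀
    exact hφ (hbij.injective (by simpa using h))
  have key : ∀ w : WeylAlgebra d, (inner ℂ (π₀ (star w * c * w) φ) φ : ℂ) =
      inner ℂ (π₀ c (π₀ w φ)) (π₀ w φ) := by
    intro w
    rw [map_mul, map_mul, Module.End.mul_apply, Module.End.mul_apply,
      hπ₀ (star w), star_star]
  have key2 : ∀ w : WeylAlgebra d, (inner ℂ (π₀ (star w * w) φ) φ : ℂ) =
      (‖π₀ w φ‖ : ℂ) ^ 2 := by
    intro w
    rw [map_mul, Module.End.mul_apply, hπ₀ (star w), star_star]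
    exact inner_self_eq_norm_sq_to_K _
  have hL : ((inner ℂ (π₀ (∑ i, star (r i) * c * r i) φ) φ : ℂ)).re ≤ 0 := by
    rw [map_sum]
    rw [show ((∑ i, π₀ (star (r i) * c * r i)) φ) =
      ∑ i, π₀ (star (r i) * c * r i) φ from LinearMap.sum_apply _ _ _,
      sum_inner, Complex.re_sum]
    refine Finset.sum_nonpos fun i _ => ?_
    rw [key]
    exact hneg _
  have hR : (0:ℝ) < ((inner ℂ (π₀ (∑ j, star (s j) * s j) φ) φ : ℂ)).re := by
    rw [map_sum]
    rw [show ((∑ j, π₀ (star (s j) * s j)) φ) =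
      ∑ j, π₀ (star (s j) * s j) φ from LinearMap.sum_apply _ _ _,
      sum_inner, Complex.re_sum]
    have h0 : (0:ℝ) < ((inner ℂ (π₀ (star (s 0) * s 0) φ) φ : ℂ)).re := by
      rw [key2]
      simp only [← Complex.ofReal_pow, Complex.ofReal_re]
      exact pow_pos (norm_pos_iff.mpr hs0) 2
    refine lt_of_lt_of_le h0 (Finset.single_le_sum (f := fun j =>
      ((inner ℂ (π₀ (star (s j) * s j) φ) φ : ℂ)).re) (fun j _ => ?_)
      (Finset.mem_univ 0))
    simp only [key2, ← Complex.ofReal_pow, Complex.ofReal_re]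
    positivity
  rw [hid] at hL
  linarith
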